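/- arXiv:2604.03743 — 5 statements merged into one kernel-verified Lean document; each statement's English description precedes it below -/
import Mathlib

section
/- Let n ≥ 1 and let γ ∈ GL_n(ℂ). The ℝ-linear endomorphism of the real vector space Herm_n(ℂ) of n×n complex Hermitian matrices defined by X ↦ γ* X γ (where γ* denotes the conjugate transpose) has positive determinant. -/
open Matrix

noncomputable section

/-- The real vector space of `n × n` complex Hermitian matrices, as an ℝ-submodule of the
complex matrices (viewed as a real vector space). -/
def HermMat (n : ℕ) : Submodule ℝ (Matrix (Fin n) (Fin n) ℂ) where
  carrier := { A | Aᴴ = A }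
  add_mem' := by
    intro a b ha hb
    simp only [Set.mem_setOf_eq] at *
    rw [Matrix.conjTranspose_add, ha, hb]
  zero_mem' := by simp
  smul_mem' := by
    intro c a ha
    simp only [Set.mem_setOf_eq] at *
    rw [Matrix.conjTranspose_smul_non_comm]
    · rw [ha]
      ext i j
      simp [mul_comm]
    · intro r
      intro x
      simp [Complex.real_smul, mul_comm]
  
/-- The ℝ-linear endomorphism `X ↦ γ* X γ` of the space of Hermitian matrices, where `γ*`
is the conjugate transpose. -/
def congrHerm (n : ℕ) (g : Matrix (Fin n) (Fin n) ℂ) : HermMat n →ₗ[ℝ] HermMat n where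
  toFun X := ⟨gᴴ * X.1 * g, by
    have hX : (X.1)ᴴ = X.1 := X.2
    show (gᴴ * X.1 * g)ᴴ = gᴴ * X.1 * g
    rw [Matrix.conjTranspose_mul, Matrix.conjTranspose_mul, Matrix.conjTranspose_conjTranspose,
      hX, Matrix.mul_assoc]⟩
  map_add' X Y := by
    ext1
    show gᴴ * (X.1 + Y.1) * g = gᴴ * X.1 * g + gᴴ * Y.1 * g
    rw [Matrix.mul_add, Matrix.add_mul]
  map_smul' c X := by
    ext1
    show gᴴ * (c • X.1) * g = c • (gᴴ * X.1 * g)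
    rw [Matrix.mul_smul, Matrix.smul_mul]


/-- Abbreviation for the real determinant of the congruence map. -/
noncomputable def sdet (n : ℕ) (g : Matrix (Fin n) (Fin n) ℂ) : ℝ :=
  LinearMap.det (congrHerm n g)

lemma congrHerm_mul (n : ℕ) (g h : Matrix (Fin n) (Fin n) ℂ) :
    congrHerm n (g * h) = (congrHerm n h).comp (congrHerm n g) := by
  refine LinearMap.ext fun X => Subtype.ext ?_
  show ((g * h)ᴴ * X.1 * (g * h) : Matrix (Fin n) (Fin n) ℂ) = hᴴ * (gᴴ * X.1 * g) * h
  rw [Matrix.conjTranspose_mul]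
  noncomm_ring

lemma congrHerm_one (n : ℕ) : congrHerm n (1 : Matrix (Fin n) (Fin n) ℂ) = LinearMap.id := by
  refine LinearMap.ext fun X => Subtype.ext ?_
  show ((1 : Matrix (Fin n) (Fin n) ℂ)ᴴ * X.1 * 1 : Matrix (Fin n) (Fin n) ℂ) = X.1
  simp

lemma sdet_mul (n : ℕ) (g h : Matrix (Fin n) (Fin n) ℂ) :
    sdet n (g * h) = sdet n g * sdet n h := by
  unfold sdet
  rw [congrHerm_mul, LinearMap.det_comp, mul_comm]

lemma sdet_one (n : ℕ) : sdet n (1 : Matrix (Fin n) (Fin n) ℂ) = 1 := by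
  unfold sdet
  rw [congrHerm_one, LinearMap.det_id]

lemma sdet_ne_zero (n : ℕ) {g : Matrix (Fin n) (Fin n) ℂ} (hg : g.det ≠ 0) :
    sdet n g ≠ 0 := by
  have hU : IsUnit g.det := Ne.isUnit hg
  have h1 : g * g⁻¹ = 1 := Matrix.mul_nonsing_inv g hU
  have := sdet_mul n g g⁻¹
  rw [h1, sdet_one] at this
  intro h0
  rw [h0, zero_mul] at this
  exact (one_ne_zero (α := ℝ)) this

lemma continuous_sdet (n : ℕ) : Continuous (sdet n) := by
  classical
  let b : Module.Basis (Fin (Module.finrank ℝ (HermMat n))) ℝ (HermMat n) := Module.finBasis ℝ (HermMat n)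
  have hdet : ∀ g, sdet n g = Matrix.det (LinearMap.toMatrix b b (congrHerm n g)) := fun g =>
    (LinearMap.det_toMatrix b _).symm
  have hcont : Continuous fun g => LinearMap.toMatrix b b (congrHerm n g) := by
    apply continuous_matrix
    intro i j
    simp only [LinearMap.toMatrix_apply]
    have h1 : Continuous fun g : Matrix (Fin n) (Fin n) ℂ => (gᴴ * (b j).1 * g) := by
      exact ((continuous_id.matrix_conjTranspose.matrix_mul continuous_const).matrix_mul
        continuous_id)
    have h2 : Continuous fun g : Matrix (Fin n) (Fin n) ℂ => (congrHerm n g) (b j) := by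
      apply Continuous.subtype_mk h1
    have h3 : Continuous fun X : HermMat n => b.coord i X :=
      LinearMap.continuous_of_finiteDimensional (b.coord i)
    exact h3.comp h2
  simpa only [← hdet] using hcont.matrix_det

lemma sdet_pos_of_path (n : ℕ) (P : ℝ → Matrix (Fin n) (Fin n) ℂ) (hP : Continuous P)
    (hdet : ∀ t, (P t).det ≠ 0) (h0 : P 0 = 1) : 0 < sdet n (P 1) := by
  have hf : Continuous fun t => sdet n (P t) := (continuous_sdet n).comp hP
  have hne : ∀ t, sdet n (P t) ≠ 0 := fun t => sdet_ne_zero n (hdet t)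
  by_contra hle
  push_neg at hle
  have h1 : sdet n (P 1) < 0 := lt_of_le_of_ne hle (hne 1)
  have h0' : (0:ℝ) < sdet n (P 0) := by rw [h0, sdet_one]; norm_num
  obtain ⟨c, _, hc⟩ := intermediate_value_Icc' (by norm_num : (0:ℝ) ≤ 1)
    (hf.continuousOn) (Set.mem_Icc.mpr ⟨h1.le, h0'.le⟩)
  exact hne c hc

lemma sdet_pos_diagonal (n : ℕ) (D : Fin n → ℂ) (hD : (Matrix.diagonal D).det ≠ 0) :
    0 < sdet n (Matrix.diagonal D) := by
  rw [Matrix.det_diagonal] at hD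
  have hDi : ∀ i, D i ≠ 0 := by
    intro i hi
    exact hD (Finset.prod_eq_zero (Finset.mem_univ i) hi)
  have key := sdet_pos_of_path n
    (fun t => Matrix.diagonal fun i => Complex.exp ((t : ℂ) * Complex.log (D i)))
    (by
      apply Continuous.matrix_diagonal
      apply continuous_pi
      intro i
      exact Complex.continuous_exp.comp ((Complex.continuous_ofReal.mul continuous_const)))
    (by
      intro t
      rw [Matrix.det_diagonal]
      exact Finset.prod_ne_zero_iff.mpr fun i _ => Complex.exp_ne_zero _)
    (by simp)
  simpa [Complex.exp_log (hDi _)] using key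

lemma sdet_pos_transvection (n : ℕ) (t : Matrix.TransvectionStruct (Fin n) ℂ) :
    0 < sdet n t.toMatrix := by
  have key := sdet_pos_of_path n
    (fun s => Matrix.transvection t.i t.j ((s : ℂ) * t.c))
    (by
      unfold Matrix.transvection
      apply Continuous.add continuous_const
      apply continuous_matrix
      intro a b
      simp only [Matrix.single, Matrix.of_apply]
      by_cases h : t.i = a ∧ t.j = b
      · simp only [h, if_true, and_self]
        exact (Complex.continuous_ofReal.mul continuous_const)
      · simp only [h, if_false]
        exact continuous_const)
    (by
      intro s
      rw [Matrix.det_transvection_of_ne _ _ t.hij]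
      norm_num)
    (by
      simp [Matrix.transvection_zero])
  simpa [Matrix.TransvectionStruct.toMatrix] using key

/-- For `n ≥ 1` and `γ ∈ GL_n(ℂ)`, the ℝ-linear endomorphism `X ↦ γ* X γ`
of the real vector space of `n × n` complex Hermitian matrices has positive determinant. -/
theorem statement2 (n : ℕ) (hn : 1 ≤ n) (γ : GL (Fin n) ℂ) :
    0 < LinearMap.det (congrHerm n (γ : Matrix (Fin n) (Fin n) ℂ)) := by
  have hdet : (γ : Matrix (Fin n) (Fin n) ℂ).det ≠ 0 := by
    have : IsUnit (γ : Matrix (Fin n) (Fin n) ℂ).det :=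
      (Matrix.isUnit_iff_isUnit_det _).mp γ.isUnit
    exact this.ne_zero
  exact Matrix.diagonal_transvection_induction_of_det_ne_zero (fun M => 0 < sdet n M)
    _ hdet (fun D hD => sdet_pos_diagonal n D hD) (fun t => sdet_pos_transvection n t)
    (fun A B _ _ hA hB => by
      show 0 < sdet n (A * B)
      rw [sdet_mul]; exact mul_pos hA hB)
end
end

section
/- Let n ≥ 1 and let h, h' be neighbouring perfect forms in Sym_n(ℝ), with τ = D(h) ∩ D(h'). Then every matrix Q lying in the relative interior of τ (the interior of τ taken inside the ℝ-linear span of τ) is positive definite. -/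
open Matrix

noncomputable section

/-- The real vector space of `n × n` real symmetric matrices, as a submodule of matrices. -/
def SymMat (n : ℕ) : Submodule ℝ (Matrix (Fin n) (Fin n) ℝ) where
  carrier := { A | Aᵀ = A }
  add_mem' := by
    intro a b ha hb
    simp only [Set.mem_setOf_eq] at *
    rw [Matrix.transpose_add, ha, hb]
  zero_mem' := by simp
  smul_mem' := by
    intro c a ha
    simp only [Set.mem_setOf_eq] at *
    rw [Matrix.transpose_smul, ha]

/-- The ℝ-linear endomorphism `X ↦ gᵀ X g` of the space of symmetric matrices. -/
def congrSym (n : ℕ) (g : Matrix (Fin n) (Fin n) ℝ) : SymMat n →ₗ[ℝ] SymMat n where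
  toFun X := ⟨gᵀ * X.1 * g, by
    have hX : (X.1)ᵀ = X.1 := X.2
    show (gᵀ * X.1 * g)ᵀ = gᵀ * X.1 * g
    rw [Matrix.transpose_mul, Matrix.transpose_mul, Matrix.transpose_transpose, hX,
      Matrix.mul_assoc]⟩
  map_add' X Y := by
    ext1
    show gᵀ * (X.1 + Y.1) * g = gᵀ * X.1 * g + gᵀ * Y.1 * g
    rw [Matrix.mul_add, Matrix.add_mul]
  map_smul' c X := by
    ext1
    show gᵀ * (c • X.1) * g = c • (gᵀ * X.1 * g)
    rw [Matrix.mul_smul, Matrix.smul_mul]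

/-- The real matrix obtained from an integer matrix. -/
def realMat {n : ℕ} (g : Matrix (Fin n) (Fin n) ℤ) : Matrix (Fin n) (Fin n) ℝ :=
  g.map (Int.cast : ℤ → ℝ)

/-- The action of `GL n ℤ` on symmetric matrices: `γ · X = (γ⁻¹)ᵀ X γ⁻¹`. -/
def intAct (n : ℕ) (γ : GL (Fin n) ℤ) : SymMat n →ₗ[ℝ] SymMat n :=
  congrSym n (realMat ((γ⁻¹ : GL (Fin n) ℤ) : Matrix (Fin n) (Fin n) ℤ))

lemma realMat_mul {n : ℕ} (A B : Matrix (Fin n) (Fin n) ℤ) :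
    realMat (A * B) = realMat A * realMat B := by
  simpa [realMat] using Matrix.map_mul (L := A) (M := B) (f := Int.castRingHom ℝ)

lemma realMat_one {n : ℕ} : realMat (1 : Matrix (Fin n) (Fin n) ℤ) = 1 := by
  simpa [realMat] using Matrix.map_one (Int.cast : ℤ → ℝ) Int.cast_zero Int.cast_one

lemma intAct_one (n : ℕ) : intAct n 1 = LinearMap.id := by
  unfold intAct congrSym
  ext X
  simp [realMat_one]

lemma intAct_mul (n : ℕ) (g h : GL (Fin n) ℤ) :
    intAct n (g * h) = (intAct n g).comp (intAct n h) := by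
  unfold intAct congrSym
  ext X
  simp [_root_.mul_inv_rev, realMat_mul, Matrix.transpose_mul, Matrix.mul_assoc]

/-- The action of `GL n ℤ` on subsets of symmetric matrices. -/
def actSet (n : ℕ) (γ : GL (Fin n) ℤ) (S : Set (SymMat n)) : Set (SymMat n) :=
  (intAct n γ) '' S

lemma actSet_one (n : ℕ) (S : Set (SymMat n)) : actSet n 1 S = S := by
  simp [actSet, intAct_one]

lemma actSet_mul (n : ℕ) (g h : GL (Fin n) ℤ) (S : Set (SymMat n)) :
    actSet n (g * h) S = actSet n g (actSet n h S) := by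
  rw [actSet, actSet, actSet, intAct_mul, ← Set.image_comp]; rfl

/-- The setwise stabilizer of `S` in the subgroup `Γ ≤ GL n ℤ`. -/
def stab (n : ℕ) (Γ : Subgroup (GL (Fin n) ℤ)) (S : Set (SymMat n)) : Subgroup (GL (Fin n) ℤ) where
  carrier := { g | g ∈ Γ ∧ actSet n g S = S }
  one_mem' := ⟨Γ.one_mem, actSet_one n S⟩
  mul_mem' := by
    rintro a b ⟨haΓ, ha⟩ ⟨hbΓ, hb⟩
    exact ⟨Γ.mul_mem haΓ hbΓ, by rw [actSet_mul, hb, ha]⟩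
  inv_mem' := by
    rintro a ⟨haΓ, ha⟩
    refine ⟨Γ.inv_mem haΓ, ?_⟩
    conv_lhs => rw [← ha]
    rw [← actSet_mul, inv_mul_cancel, actSet_one]
/-- The value `xᵀ h x` of a real quadratic form at an integer vector. -/
def intQuad (n : ℕ) (h : Matrix (Fin n) (Fin n) ℝ) (x : Fin n → ℤ) : ℝ :=
  (fun i => (x i : ℝ)) ⬝ᵥ h.mulVec (fun i => (x i : ℝ))

/-- The set of minimal vectors of `h`: the nonzero integer vectors achieving the minimum
of `h` over nonzero integer vectors. -/
def minVecs (n : ℕ) (h : Matrix (Fin n) (Fin n) ℝ) : Set (Fin n → ℤ) :=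
  { x | x ≠ 0 ∧ ∀ y : Fin n → ℤ, y ≠ 0 → intQuad n h x ≤ intQuad n h y }

/-- The symmetric rank-one matrix `x xᵀ` associated with an integer vector `x`. -/
def rankOneSym (n : ℕ) (x : Fin n → ℤ) : SymMat n :=
  ⟨Matrix.vecMulVec (fun i => (x i : ℝ)) (fun i => (x i : ℝ)), by
    show (Matrix.vecMulVec _ _)ᵀ = _
    ext i j
    simp [Matrix.vecMulVec, mul_comm]⟩

/-- A positive definite form `h` is perfect if the rank-one matrices `x xᵀ`, for `x` a
minimal vector of `h`, span the space of symmetric matrices. -/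
def IsPerfect (n : ℕ) (h : Matrix (Fin n) (Fin n) ℝ) : Prop :=
  h.PosDef ∧ Submodule.span ℝ (rankOneSym n '' minVecs n h) = ⊤

/-- The Voronoi domain of `h`: all nonnegative real linear combinations of the matrices
`x xᵀ` for `x` a minimal vector of `h`. -/
def VorDom (n : ℕ) (h : Matrix (Fin n) (Fin n) ℝ) : Set (SymMat n) :=
  { M | ∃ (s : Finset (Fin n → ℤ)) (c : (Fin n → ℤ) → ℝ),
      (∀ x ∈ s, x ∈ minVecs n h) ∧ (∀ x ∈ s, 0 ≤ c x) ∧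
      M = ∑ x ∈ s, c x • rankOneSym n x }

/-- `τ` is a facet of the convex cone `C`: an extreme subset whose ℝ-linear span is a
hyperplane (codimension-one subspace). -/
def IsFacetOf (n : ℕ) (C τ : Set (SymMat n)) : Prop :=
  IsExtreme ℝ C τ ∧
    Module.finrank ℝ (Submodule.span ℝ τ) + 1 = Module.finrank ℝ (SymMat n)

/-- Two perfect forms are neighbours if their (distinct) Voronoi domains intersect in a
common facet. -/
def Neighbours (n : ℕ) (h h' : Matrix (Fin n) (Fin n) ℝ) : Prop :=
  IsPerfect n h ∧ IsPerfect n h' ∧ VorDom n h ≠ VorDom n h' ∧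
    IsFacetOf n (VorDom n h) (VorDom n h ∩ VorDom n h') ∧
    IsFacetOf n (VorDom n h') (VorDom n h ∩ VorDom n h')

/-- Standing assumption (a theorem of Voronoi reduction theory): every facet of the
Voronoi domain of a perfect form is contained in exactly two Voronoi domains of perfect
forms, and is their intersection. -/
def StandingAssumption (n : ℕ) : Prop :=
  ∀ h : Matrix (Fin n) (Fin n) ℝ, IsPerfect n h →
    ∀ τ : Set (SymMat n), IsFacetOf n (VorDom n h) τ →
      ∃ h' : Matrix (Fin n) (Fin n) ℝ, IsPerfect n h' ∧ VorDom n h' ≠ VorDom n h ∧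
        τ = VorDom n h ∩ VorDom n h' ∧
        ∀ h'' : Matrix (Fin n) (Fin n) ℝ, IsPerfect n h'' → τ ⊆ VorDom n h'' →
          VorDom n h'' = VorDom n h ∨ VorDom n h'' = VorDom n h'


section AuxProofs

/-- auxiliary: `vᵀ (a aᵀ) v = (v⬝a)²`. -/
lemma dot_vecMulVec (n : ℕ) (v a : Fin n → ℝ) :
    v ⬝ᵥ (Matrix.vecMulVec a a) *ᵥ v = (v ⬝ᵥ a)^2 := by
  simp only [dotProduct, Matrix.mulVec, Matrix.vecMulVec_apply, dotProduct, pow_two,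
    Finset.sum_mul, Finset.mul_sum]
  rw [Finset.sum_comm]
  exact Finset.sum_congr rfl fun i _ => Finset.sum_congr rfl fun j _ => by ring

/-- The linear functional `M ↦ vᵀ M v` on symmetric matrices. -/
def qf (n : ℕ) (v : Fin n → ℝ) : SymMat n →ₗ[ℝ] ℝ where
  toFun M := v ⬝ᵥ (M : Matrix (Fin n) (Fin n) ℝ) *ᵥ v
  map_add' M N := by simp [Matrix.add_mulVec, dotProduct_add]
  map_smul' c M := by simp [Matrix.smul_mulVec, dotProduct_smul]

lemma qf_apply (n : ℕ) (v : Fin n → ℝ) (M : SymMat n) :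
    qf n v M = v ⬝ᵥ (M : Matrix (Fin n) (Fin n) ℝ) *ᵥ v := rfl

lemma rankOneSym_coe (n : ℕ) (x : Fin n → ℤ) :
    (rankOneSym n x : Matrix (Fin n) (Fin n) ℝ)
      = Matrix.vecMulVec (fun i => (x i : ℝ)) (fun i => (x i : ℝ)) := rfl

lemma qf_rankOneSym (n : ℕ) (v : Fin n → ℝ) (x : Fin n → ℤ) :
    qf n v (rankOneSym n x) = (v ⬝ᵥ fun i => (x i : ℝ))^2 := by
  rw [qf_apply, rankOneSym_coe]
  exact dot_vecMulVec n v _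

/-- The symmetric matrix `v vᵀ` for a real vector `v`. -/
def symOf (n : ℕ) (v : Fin n → ℝ) : SymMat n :=
  ⟨Matrix.vecMulVec v v, by
    show (Matrix.vecMulVec v v)ᵀ = _
    ext i j
    simp [Matrix.vecMulVec_apply, mul_comm]⟩

lemma symOf_coe (n : ℕ) (v : Fin n → ℝ) :
    (symOf n v : Matrix (Fin n) (Fin n) ℝ) = Matrix.vecMulVec v v := rfl

lemma qf_symOf (n : ℕ) (v : Fin n → ℝ) : qf n v (symOf n v) = (v ⬝ᵥ v)^2 := by
  rw [qf_apply, symOf_coe]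
  exact dot_vecMulVec n v v

lemma dot_self_pos {n : ℕ} {v : Fin n → ℝ} (hv : v ≠ 0) : 0 < v ⬝ᵥ v := by
  have h1 : 0 ≤ v ⬝ᵥ v := Finset.sum_nonneg fun i _ => mul_self_nonneg (v i)
  rcases h1.lt_or_eq with h | h
  · exact h
  · exact absurd (dotProduct_self_eq_zero.mp h.symm) hv

lemma qf_symOf_pos {n : ℕ} {v : Fin n → ℝ} (hv : v ≠ 0) : 0 < qf n v (symOf n v) := by
  rw [qf_symOf]
  exact pow_pos (dot_self_pos hv) 2

lemma zero_mem_vorDom (n : ℕ) (h : Matrix (Fin n) (Fin n) ℝ) : (0 : SymMat n) ∈ VorDom n h :=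
  ⟨∅, 0, by simp, by simp, by simp⟩

lemma vorDom_nonneg (n : ℕ) (h : Matrix (Fin n) (Fin n) ℝ) (v : Fin n → ℝ) {M : SymMat n}
    (hM : M ∈ VorDom n h) : 0 ≤ qf n v M := by
  obtain ⟨s, c, _, hc, rfl⟩ := hM
  rw [map_sum]
  refine Finset.sum_nonneg fun x hx => ?_
  rw [_root_.map_smul, qf_rankOneSym]
  exact mul_nonneg (hc x hx) (sq_nonneg _)

lemma vorDom_add_gen (n : ℕ) (h : Matrix (Fin n) (Fin n) ℝ) {M : SymMat n}
    (hM : M ∈ VorDom n h) {x : Fin n → ℤ} (hx : x ∈ minVecs n h) {t : ℝ} (ht : 0 ≤ t) :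
    M + t • rankOneSym n x ∈ VorDom n h := by
  obtain ⟨s, c, hmin, hc, rfl⟩ := hM
  refine ⟨insert x s, fun y => (if y ∈ s then c y else 0) + (if y = x then t else 0),
    ?_, ?_, ?_⟩
  · intro y hy
    rcases Finset.mem_insert.mp hy with rfl | hy
    · exact hx
    · exact hmin y hy
  · intro y hy
    show 0 ≤ (if y ∈ s then c y else 0) + (if y = x then t else 0)
    have h1 : 0 ≤ (if y ∈ s then c y else 0 : ℝ) := by
      split_ifs with hys
      · exact hc y hys
      · exact le_refl 0
    have h2 : 0 ≤ (if y = x then t else 0 : ℝ) := by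
      split_ifs
      · exact ht
      · exact le_refl 0
    exact add_nonneg h1 h2
  · have key : ∀ y ∈ insert x s,
        ((if y ∈ s then c y else 0) + (if y = x then t else 0)) • rankOneSym n y
          = (if y ∈ s then c y • rankOneSym n y else 0)
            + (if y = x then t • rankOneSym n y else 0) := by
      intro y _
      simp [add_smul, ite_smul]
    rw [Finset.sum_congr rfl key, Finset.sum_add_distrib, Finset.sum_ite_mem,
      Finset.sum_ite_eq' (insert x s) x (fun y => t • rankOneSym n y),
      Finset.inter_eq_right.mpr (Finset.subset_insert x s),
      if_pos (Finset.mem_insert_self x s)]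

lemma relint_step {n : ℕ} {τ : Set (SymMat n)} (h0 : (0 : SymMat n) ∈ τ)
    {Q d : SymMat n} (hQ : Q ∈ intrinsicInterior ℝ τ)
    (hd : d ∈ Submodule.span ℝ τ) :
    ∃ ε : ℝ, 0 < ε ∧ Q + ε • d ∈ τ := by
  obtain ⟨y, hy, hyQ⟩ := hQ
  have hQτ : Q ∈ τ := by
    rw [← hyQ]
    exact Set.mem_preimage.mp (interior_subset (s := (Subtype.val ⁻¹' τ : Set (affineSpan ℝ τ))) hy)
  have hQmem : Q ∈ affineSpan ℝ τ := subset_affineSpan ℝ τ hQτ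
  have hdir : d ∈ (affineSpan ℝ τ).direction := by
    rw [direction_affineSpan]
    refine Submodule.span_le.mpr (fun a ha => Submodule.subset_span ?_) hd
    exact ⟨a, ha, 0, h0, by simp⟩
  have hdmem : ∀ t : ℝ, Q + t • d ∈ affineSpan ℝ τ := by
    intro t
    have := AffineSubspace.vadd_mem_of_mem_direction
      (Submodule.smul_mem _ t hdir) hQmem
    simpa [vadd_eq_add, add_comm] using this
  set f : ℝ → (affineSpan ℝ τ : Set (SymMat n)) := fun t => ⟨Q + t • d, hdmem t⟩ with hf_def
  have hf : Continuous f := by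
    refine Continuous.subtype_mk ?_ _
    fun_prop
  have hop : IsOpen (f ⁻¹' interior ((↑) ⁻¹' τ)) := isOpen_interior.preimage hf
  have h0m : (0 : ℝ) ∈ f ⁻¹' interior ((↑) ⁻¹' τ) := by
    have hf0 : f 0 = y := Subtype.ext (by simp [hf_def, hyQ])
    simp only [Set.mem_preimage, hf0]
    exact hy
  obtain ⟨ε, hε, hball⟩ := Metric.isOpen_iff.mp hop 0 h0m
  refine ⟨ε / 2, by positivity, ?_⟩
  have hmem : f (ε / 2) ∈ interior ((↑) ⁻¹' τ) := by
    refine hball ?_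
    simp only [Metric.mem_ball, Real.dist_eq, sub_zero]
    rw [abs_of_pos (by positivity)]
    linarith
  exact Set.mem_preimage.mp (interior_subset (s := (Subtype.val ⁻¹' τ : Set (affineSpan ℝ τ))) hmem)

lemma exists_gen {n : ℕ} {h : Matrix (Fin n) (Fin n) ℝ} (hp : IsPerfect n h)
    {v : Fin n → ℝ} (hv : v ≠ 0) :
    ∃ x ∈ minVecs n h, 0 < qf n v (rankOneSym n x) := by
  by_contra hcon
  push_neg at hcon
  have hsub : rankOneSym n '' minVecs n h ⊆ (LinearMap.ker (qf n v) : Set (SymMat n)) := by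
    rintro _ ⟨x, hx, rfl⟩
    have h1 : qf n v (rankOneSym n x) ≤ 0 := hcon x hx
    have h2 : 0 ≤ qf n v (rankOneSym n x) := by
      rw [qf_rankOneSym]
      exact sq_nonneg _
    simpa [LinearMap.mem_ker] using le_antisymm h1 h2
  have hker : (⊤ : Submodule ℝ (SymMat n)) ≤ LinearMap.ker (qf n v) := by
    rw [← hp.2]
    exact Submodule.span_le.mpr hsub
  have h0 : qf n v (symOf n v) = 0 := hker Submodule.mem_top
  exact absurd h0 (ne_of_gt (qf_symOf_pos hv))

end AuxProofs

set_option maxHeartbeats 1600000 in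
/-- If `h, h'` are neighbouring perfect forms and `τ = D(h) ∩ D(h')`, then
every matrix in the relative interior of `τ` (interior taken inside the span of `τ`) is
positive definite. -/
theorem statement4 (n : ℕ) (hn : 1 ≤ n) (h h' : Matrix (Fin n) (Fin n) ℝ)
    (hnb : Neighbours n h h') (Q : SymMat n)
    (hQ : Q ∈ intrinsicInterior ℝ (VorDom n h ∩ VorDom n h')) :
    (Q : Matrix (Fin n) (Fin n) ℝ).PosDef := by
  obtain ⟨hp, hp', hne, ⟨hext, hdim⟩, hfac'⟩ := hnb
  have h0τ : (0 : SymMat n) ∈ VorDom n h ∩ VorDom n h' :=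
    ⟨zero_mem_vorDom n h, zero_mem_vorDom n h'⟩
  have hQτ : Q ∈ VorDom n h ∩ VorDom n h' := intrinsicInterior_subset hQ
  rw [Matrix.posDef_iff_dotProduct_mulVec]
  constructor
  · show (Q : Matrix (Fin n) (Fin n) ℝ)ᴴ = Q
    have h2 : (Q : Matrix (Fin n) (Fin n) ℝ)ᵀ = Q := Q.2
    ext i j
    simpa [Matrix.conjTranspose_apply] using congrFun (congrFun h2 i) j
  intro v hv
  have hnn : 0 ≤ qf n v Q := vorDom_nonneg n h v hQτ.1
  have hgoal : (0 : ℝ) < qf n v Q := by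
    rcases hnn.lt_or_eq with hpos | heq0
    · exact hpos
    exfalso
    have hQ0 : qf n v Q = 0 := heq0.symm
    obtain ⟨x, hxmin, hxpos⟩ := exists_gen hp hv
    obtain ⟨x', hx'min, hx'pos⟩ := exists_gen hp' hv
    set A := rankOneSym n x with hA
    set A' := rankOneSym n x' with hA'
    set lam : ℝ := qf n v A / qf n v A' with hlam_def
    have hlam : 0 < lam := div_pos hxpos hx'pos
    set d : SymMat n := A - lam • A' with hd_def
    have hdker : qf n v d = 0 := by
      rw [hd_def, map_sub, _root_.map_smul, hlam_def, smul_eq_mul,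
        div_mul_cancel₀ _ (ne_of_gt hx'pos), sub_self]
    -- every element of τ is killed by the functional
    have hτker : ∀ M ∈ VorDom n h ∩ VorDom n h', qf n v M = 0 := by
      intro M hM
      have hnnM : 0 ≤ qf n v M := vorDom_nonneg n h v hM.1
      by_contra hne0
      have hMpos : 0 < qf n v M := lt_of_le_of_ne hnnM (Ne.symm hne0)
      have hdd : Q - M ∈ Submodule.span ℝ (VorDom n h ∩ VorDom n h') :=
        Submodule.sub_mem _ (Submodule.subset_span hQτ) (Submodule.subset_span hM)
      obtain ⟨ε, hε, hmem⟩ := relint_step h0τ hQ hdd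
      have h1 : 0 ≤ qf n v (Q + ε • (Q - M)) := vorDom_nonneg n h v hmem.1
      have h2 : qf n v (Q + ε • (Q - M)) = -(ε * qf n v M) := by
        rw [map_add, _root_.map_smul, map_sub, hQ0]
        simp only [smul_eq_mul]
        ring
      rw [h2] at h1
      nlinarith
    have hle : Submodule.span ℝ (VorDom n h ∩ VorDom n h') ≤ LinearMap.ker (qf n v) :=
      Submodule.span_le.mpr fun M hM => LinearMap.mem_ker.mpr (hτker M hM)
    have hrange : LinearMap.range (qf n v) = ⊤ := by
      rw [LinearMap.range_eq_top]
      intro r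
      refine ⟨(r / qf n v (symOf n v)) • symOf n v, ?_⟩
      rw [_root_.map_smul, smul_eq_mul, div_mul_cancel₀ _ (ne_of_gt (qf_symOf_pos hv))]
    have hkerrank : Module.finrank ℝ (LinearMap.ker (qf n v)) + 1
        = Module.finrank ℝ (SymMat n) := by
      have hrn := LinearMap.finrank_range_add_finrank_ker (qf n v)
      rw [hrange, finrank_top, Module.finrank_self] at hrn
      omega
    have heqsub : Submodule.span ℝ (VorDom n h ∩ VorDom n h') = LinearMap.ker (qf n v) :=
      Submodule.eq_of_le_of_finrank_eq hle (by omega)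
    have hdspan : d ∈ Submodule.span ℝ (VorDom n h ∩ VorDom n h') := by
      rw [heqsub]
      exact LinearMap.mem_ker.mpr hdker
    obtain ⟨ε, hε, hpmem⟩ := relint_step h0τ hQ hdspan
    have hstep1 : Q + ε • d + (ε * lam) • A' ∈ VorDom n h' :=
      vorDom_add_gen n h' hpmem.2 hx'min (mul_nonneg hε.le hlam.le)
    have hrwmat : Q + ε • d + (ε * lam) • A' = Q + ε • A := by
      rw [hd_def]
      rw [smul_sub, smul_smul]
      abel
    have hstep2 : Q + ε • A ∈ VorDom n h := vorDom_add_gen n h hQτ.1 hxmin hε.le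
    have hτ3 : Q + ε • A ∈ VorDom n h ∩ VorDom n h' := ⟨hstep2, by rw [← hrwmat]; exact hstep1⟩
    have hzero := hτker _ hτ3
    rw [_root_.map_add, _root_.map_smul, hQ0, smul_eq_mul] at hzero
    nlinarith
  show (0:ℝ) < dotProduct (star v) ((Q : Matrix (Fin n) (Fin n) ℝ) *ᵥ v)
  simpa [qf] using hgoal
end
end

section
/- Let n ≥ 1, let Γ be a subgroup of GL_n(ℤ), and let h, h' be neighbouring perfect forms with σ = D(h), ρ = D(h'), and τ = σ ∩ ρ. Assume that σ and ρ are not in the same Γ-orbit. Then the setwise stabilizer of τ in Γ equals the intersection of the setwise stabilizers of σ and of ρ: Γ_τ = Γ_σ ∩ Γ_ρ. -/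
open Matrix

noncomputable section

namespace S5

variable {n : ℕ}

/-- cast of integer vector to real vector -/
def zc (x : Fin n → ℤ) : Fin n → ℝ := fun i => (x i : ℝ)

lemma realMat_transpose (A : Matrix (Fin n) (Fin n) ℤ) :
    realMat Aᵀ = (realMat A)ᵀ := Matrix.transpose_map

lemma zc_mulVec (A : Matrix (Fin n) (Fin n) ℤ) (x : Fin n → ℤ) :
    zc (A *ᵥ x) = realMat A *ᵥ zc x :=
  funext fun i => (Int.castRingHom ℝ).map_mulVec A x i

lemma intQuad_eq (h : Matrix (Fin n) (Fin n) ℝ) (x : Fin n → ℤ) :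
    intQuad n h x = zc x ⬝ᵥ (h *ᵥ zc x) := rfl

lemma tcancel₁ (γ : GL (Fin n) ℤ) (y : Fin n → ℤ) :
    ((γ⁻¹ : GL (Fin n) ℤ) : Matrix (Fin n) (Fin n) ℤ)ᵀ *ᵥ
      (((γ : Matrix (Fin n) (Fin n) ℤ))ᵀ *ᵥ y) = y := by
  rw [Matrix.mulVec_mulVec, ← Matrix.transpose_mul, Units.mul_inv, Matrix.transpose_one,
    Matrix.one_mulVec]

lemma tcancel₂ (γ : GL (Fin n) ℤ) (y : Fin n → ℤ) :
    ((γ : Matrix (Fin n) (Fin n) ℤ))ᵀ *ᵥ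
      (((γ⁻¹ : GL (Fin n) ℤ) : Matrix (Fin n) (Fin n) ℤ)ᵀ *ᵥ y) = y := by
  simpa using tcancel₁ γ⁻¹ y

/-- the transformed quadratic form `γ · h` (so that `D(γ·h) = γ · D(h)`). -/
def trans (γ : GL (Fin n) ℤ) (h : Matrix (Fin n) (Fin n) ℝ) : Matrix (Fin n) (Fin n) ℝ :=
  realMat (γ : Matrix (Fin n) (Fin n) ℤ) * h * (realMat (γ : Matrix (Fin n) (Fin n) ℤ))ᵀ

lemma trans_trans (γ δ : GL (Fin n) ℤ) (h : Matrix (Fin n) (Fin n) ℝ) :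
    trans γ (trans δ h) = trans (γ * δ) h := by
  unfold trans
  rw [Units.val_mul, realMat_mul, Matrix.transpose_mul]
  noncomm_ring

lemma trans_one (h : Matrix (Fin n) (Fin n) ℝ) : trans 1 h = h := by
  simp [trans, realMat_one]

lemma intQuad_trans (γ : GL (Fin n) ℤ) (h : Matrix (Fin n) (Fin n) ℝ) (y : Fin n → ℤ) :
    intQuad n (trans γ h) y = intQuad n h (((γ : Matrix (Fin n) (Fin n) ℤ))ᵀ *ᵥ y) := by
  rw [intQuad_eq, intQuad_eq, zc_mulVec, realMat_transpose, trans,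
    ← Matrix.mulVec_mulVec, ← Matrix.mulVec_mulVec, Matrix.dotProduct_mulVec,
    ← Matrix.mulVec_transpose]

lemma mulVec_t_ne_zero (γ : GL (Fin n) ℤ) {y : Fin n → ℤ} (hy : y ≠ 0) :
    ((γ : Matrix (Fin n) (Fin n) ℤ))ᵀ *ᵥ y ≠ 0 := by
  intro h0
  apply hy
  rw [← tcancel₁ γ y, h0, Matrix.mulVec_zero]

lemma mulVec_tinv_ne_zero (γ : GL (Fin n) ℤ) {y : Fin n → ℤ} (hy : y ≠ 0) :
    ((γ⁻¹ : GL (Fin n) ℤ) : Matrix (Fin n) (Fin n) ℤ)ᵀ *ᵥ y ≠ 0 := by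
  simpa using mulVec_t_ne_zero γ⁻¹ hy

lemma mem_minVecs_trans (γ : GL (Fin n) ℤ) (h : Matrix (Fin n) (Fin n) ℝ) (y : Fin n → ℤ) :
    y ∈ minVecs n (trans γ h) ↔ ((γ : Matrix (Fin n) (Fin n) ℤ))ᵀ *ᵥ y ∈ minVecs n h := by
  constructor
  · rintro ⟨hy0, hmin⟩
    refine ⟨mulVec_t_ne_zero γ hy0, fun z hz => ?_⟩
    have h1 := hmin (((γ⁻¹ : GL (Fin n) ℤ) : Matrix (Fin n) (Fin n) ℤ)ᵀ *ᵥ z)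
      (mulVec_tinv_ne_zero γ hz)
    rw [intQuad_trans, intQuad_trans, tcancel₂] at h1
    exact h1
  · rintro ⟨hy0, hmin⟩
    have hy0' : y ≠ 0 := by
      intro h0; apply hy0; rw [h0, Matrix.mulVec_zero]
    refine ⟨hy0', fun z hz => ?_⟩
    rw [intQuad_trans, intQuad_trans]
    exact hmin _ (mulVec_t_ne_zero γ hz)

/-- the bijection on integer vectors induced by γ -/
def phi (γ : GL (Fin n) ℤ) (x : Fin n → ℤ) : Fin n → ℤ :=
  ((γ⁻¹ : GL (Fin n) ℤ) : Matrix (Fin n) (Fin n) ℤ)ᵀ *ᵥ x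

lemma phi_injective (γ : GL (Fin n) ℤ) : Function.Injective (phi (n := n) γ) := by
  intro a b hab
  have h2 : ((γ : Matrix (Fin n) (Fin n) ℤ))ᵀ *ᵥ phi γ a
      = ((γ : Matrix (Fin n) (Fin n) ℤ))ᵀ *ᵥ phi γ b := by rw [hab]
  rwa [phi, tcancel₂, phi, tcancel₂] at h2

lemma minVecs_trans (γ : GL (Fin n) ℤ) (h : Matrix (Fin n) (Fin n) ℝ) :
    minVecs n (trans γ h) = phi γ '' minVecs n h := by
  ext y
  rw [mem_minVecs_trans]
  constructor
  · intro hy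
    exact ⟨_, hy, tcancel₁ γ y⟩
  · rintro ⟨x, hx, rfl⟩
    rwa [phi, tcancel₂]

lemma intAct_rankOneSym (γ : GL (Fin n) ℤ) (x : Fin n → ℤ) :
    intAct n γ (rankOneSym n x) = rankOneSym n (phi γ x) := by
  apply Subtype.ext
  show (realMat _)ᵀ * Matrix.vecMulVec (zc x) (zc x) * realMat _ = Matrix.vecMulVec _ _
  have hz : (fun i => ((phi γ x) i : ℝ)) = (realMat ((γ⁻¹ : GL (Fin n) ℤ) : Matrix (Fin n) (Fin n) ℤ))ᵀ *ᵥ zc x := by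
    rw [← realMat_transpose]
    exact zc_mulVec _ x
  rw [hz, Matrix.vecMulVec_eq Unit, Matrix.vecMulVec_eq Unit, Matrix.replicateCol_mulVec,
    Matrix.mulVec_transpose, Matrix.replicateRow_vecMul]
  simp only [Matrix.mul_assoc]

lemma intAct_leftInv (γ : GL (Fin n) ℤ) (X : SymMat n) :
    intAct n γ⁻¹ (intAct n γ X) = X := by
  have := congrArg (fun f => f X) (intAct_mul n γ⁻¹ γ).symm
  simpa [inv_mul_cancel, intAct_one] using this

lemma intAct_injective (γ : GL (Fin n) ℤ) : Function.Injective (intAct n γ) := by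
  intro a b hab
  have := congrArg (intAct n γ⁻¹) hab
  rwa [intAct_leftInv, intAct_leftInv] at this

lemma intAct_surjective (γ : GL (Fin n) ℤ) : Function.Surjective (intAct n γ) := by
  intro y
  refine ⟨intAct n γ⁻¹ y, ?_⟩
  have := congrArg (fun f => f y) (intAct_mul n γ γ⁻¹).symm
  simpa [mul_inv_cancel, intAct_one] using this

lemma actSet_VorDom_subset (γ : GL (Fin n) ℤ) (h : Matrix (Fin n) (Fin n) ℝ) :
    actSet n γ (VorDom n h) ⊆ VorDom n (trans γ h) := by
  rintro _ ⟨M, ⟨s, c, hmem, hnn, rfl⟩, rfl⟩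
  refine ⟨s.image (phi γ), fun z => c (((γ : Matrix (Fin n) (Fin n) ℤ))ᵀ *ᵥ z), ?_, ?_, ?_⟩
  · rintro z hz
    rcases Finset.mem_image.mp hz with ⟨x, hx, rfl⟩
    rw [minVecs_trans]
    exact ⟨x, hmem x hx, rfl⟩
  · rintro z hz
    rcases Finset.mem_image.mp hz with ⟨x, hx, rfl⟩
    show 0 ≤ c (((γ : Matrix (Fin n) (Fin n) ℤ))ᵀ *ᵥ phi γ x)
    rw [phi, tcancel₂]
    exact hnn x hx
  · rw [map_sum]
    rw [Finset.sum_image (fun a _ b _ hab => phi_injective γ hab)]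
    apply Finset.sum_congr rfl
    intro x hx
    show intAct n γ (c x • rankOneSym n x)
        = c (((γ : Matrix (Fin n) (Fin n) ℤ))ᵀ *ᵥ phi γ x) • rankOneSym n (phi γ x)
    rw [LinearMap.map_smul, intAct_rankOneSym, phi, tcancel₂]

lemma actSet_mono (γ : GL (Fin n) ℤ) {S T : Set (SymMat n)} (hST : S ⊆ T) :
    actSet n γ S ⊆ actSet n γ T := Set.image_mono hST

lemma actSet_VorDom (γ : GL (Fin n) ℤ) (h : Matrix (Fin n) (Fin n) ℝ) :
    actSet n γ (VorDom n h) = VorDom n (trans γ h) := by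
  refine (actSet_VorDom_subset γ h).antisymm ?_
  have h1 : actSet n γ⁻¹ (VorDom n (trans γ h)) ⊆ VorDom n h := by
    have := actSet_VorDom_subset γ⁻¹ (trans γ h)
    rwa [trans_trans, inv_mul_cancel, trans_one] at this
  have := actSet_mono γ h1
  rwa [← actSet_mul, mul_inv_cancel, actSet_one] at this

lemma realMat_isUnit (γ : GL (Fin n) ℤ) :
    IsUnit (realMat (γ : Matrix (Fin n) (Fin n) ℤ)) := by
  have : realMat (γ : Matrix (Fin n) (Fin n) ℤ) =
      (Int.castRingHom ℝ).mapMatrix (γ : Matrix (Fin n) (Fin n) ℤ) := rfl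
  rw [this]
  exact (γ.isUnit.map (Int.castRingHom ℝ).mapMatrix)

lemma realMat_t_mulVec_ne_zero (γ : GL (Fin n) ℤ) {x : Fin n → ℝ} (hx : x ≠ 0) :
    (realMat (γ : Matrix (Fin n) (Fin n) ℤ))ᵀ *ᵥ x ≠ 0 := by
  intro h0
  apply hx
  have hc : (realMat ((γ⁻¹ : GL (Fin n) ℤ) : Matrix (Fin n) (Fin n) ℤ))ᵀ *ᵥ
      ((realMat (γ : Matrix (Fin n) (Fin n) ℤ))ᵀ *ᵥ x) = x := by
    rw [Matrix.mulVec_mulVec, ← Matrix.transpose_mul, ← realMat_mul, Units.mul_inv,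
      realMat_one, Matrix.transpose_one, Matrix.one_mulVec]
  rw [← hc, h0, Matrix.mulVec_zero]

lemma posDef_trans (γ : GL (Fin n) ℤ) {h : Matrix (Fin n) (Fin n) ℝ} (hh : h.PosDef) :
    (trans γ h).PosDef := by
  rw [Matrix.posDef_iff_dotProduct_mulVec]
  constructor
  · have := Matrix.isHermitian_mul_mul_conjTranspose
      (realMat (γ : Matrix (Fin n) (Fin n) ℤ)) hh.1
    rwa [Matrix.conjTranspose_eq_transpose_of_trivial] at this
  · intro x hx
    have key : star x ⬝ᵥ (trans γ h *ᵥ x) =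
        star ((realMat (γ : Matrix (Fin n) (Fin n) ℤ))ᵀ *ᵥ x) ⬝ᵥ
          (h *ᵥ ((realMat (γ : Matrix (Fin n) (Fin n) ℤ))ᵀ *ᵥ x)) := by
      simp only [star_trivial]
      rw [trans, ← Matrix.mulVec_mulVec, ← Matrix.mulVec_mulVec, Matrix.dotProduct_mulVec,
        ← Matrix.mulVec_transpose]
    rw [key]
    exact hh.dotProduct_mulVec_pos (realMat_t_mulVec_ne_zero γ hx)

lemma isPerfect_trans (γ : GL (Fin n) ℤ) {h : Matrix (Fin n) (Fin n) ℝ}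
    (hp : IsPerfect n h) : IsPerfect n (trans γ h) := by
  refine ⟨posDef_trans γ hp.1, ?_⟩
  have himg : rankOneSym n '' minVecs n (trans γ h) =
      intAct n γ '' (rankOneSym n '' minVecs n h) := by
    rw [minVecs_trans, ← Set.image_comp, ← Set.image_comp]
    apply Set.image_congr
    intro x _
    exact (intAct_rankOneSym γ x).symm
  rw [himg, Submodule.span_image, hp.2, Submodule.map_top,
    LinearMap.range_eq_top.mpr (intAct_surjective γ)]

end S5

/-- Let `Γ ≤ GL_n(ℤ)` and let `h, h'` be neighbouring perfect forms with
`σ = D(h)`, `ρ = D(h')`, `τ = σ ∩ ρ`, where `σ` and `ρ` are not in the same `Γ`-orbit.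
Then the setwise stabilizer of `τ` in `Γ` equals `Γ_σ ∩ Γ_ρ`. -/
theorem statement5 (n : ℕ) (hn : 1 ≤ n) (standing : StandingAssumption n)
    (Γ : Subgroup (GL (Fin n) ℤ)) (h h' : Matrix (Fin n) (Fin n) ℝ)
    (hnb : Neighbours n h h')
    (σ ρ τ : Set (SymMat n)) (hσ : σ = VorDom n h) (hρ : ρ = VorDom n h')
    (hτ : τ = σ ∩ ρ)
    (horb : ¬ ∃ g ∈ Γ, actSet n g σ = ρ) :
    stab n Γ τ = stab n Γ σ ⊓ stab n Γ ρ := by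
  have hperf : IsPerfect n h := hnb.1
  have hperf' : IsPerfect n h' := hnb.2.1
  have hne : VorDom n h ≠ VorDom n h' := hnb.2.2.1
  have hfacet : IsFacetOf n (VorDom n h) τ := by
    rw [hτ, hσ, hρ]; exact hnb.2.2.2.1
  obtain ⟨h₂, hp₂, hne₂, hτeq, huniq⟩ := standing h hperf τ hfacet
  have hτσ : τ ⊆ σ := by rw [hτ]; exact Set.inter_subset_left
  have hτρ : τ ⊆ ρ := by rw [hτ]; exact Set.inter_subset_right
  have hD2 : VorDom n h₂ = ρ := by
    rcases huniq h' hperf' (hρ ▸ hτρ) with h1 | h1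
    · exact (hne h1.symm).elim
    · rw [hρ]; exact h1.symm
  have key : ∀ h'' : Matrix (Fin n) (Fin n) ℝ, IsPerfect n h'' → τ ⊆ VorDom n h'' →
      VorDom n h'' = σ ∨ VorDom n h'' = ρ := by
    intro h'' hp'' hsub
    rcases huniq h'' hp'' hsub with h1 | h1
    · left; rw [h1, hσ]
    · right; rw [h1, hD2]
  ext g
  constructor
  · rintro ⟨hgΓ, hgτ⟩
    have hσD : actSet n g σ = VorDom n (S5.trans g h) := by
      rw [hσ]; exact S5.actSet_VorDom g h
    have hρD : actSet n g ρ = VorDom n (S5.trans g h') := by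
      rw [hρ]; exact S5.actSet_VorDom g h'
    have hτsubσ : τ ⊆ actSet n g σ := by
      calc τ = actSet n g τ := hgτ.symm
        _ ⊆ actSet n g σ := S5.actSet_mono g hτσ
    have hτsubρ : τ ⊆ actSet n g ρ := by
      calc τ = actSet n g τ := hgτ.symm
        _ ⊆ actSet n g ρ := S5.actSet_mono g hτρ
    have hσg : actSet n g σ = σ ∨ actSet n g σ = ρ := by
      rw [hσD]
      exact key _ (S5.isPerfect_trans g hperf) (hσD ▸ hτsubσ)
    have hρg : actSet n g ρ = σ ∨ actSet n g ρ = ρ := by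
      rw [hρD]
      exact key _ (S5.isPerfect_trans g hperf') (hρD ▸ hτsubρ)
    have hσg' : actSet n g σ = σ := by
      rcases hσg with h1 | h1
      · exact h1
      · exact absurd ⟨g, hgΓ, h1⟩ horb
    have hρg' : actSet n g ρ = ρ := by
      rcases hρg with h1 | h1
      · exfalso
        apply horb
        refine ⟨g⁻¹, Γ.inv_mem hgΓ, ?_⟩
        rw [← h1, ← actSet_mul, inv_mul_cancel, actSet_one]
      · exact h1
    exact ⟨⟨hgΓ, hσg'⟩, ⟨hgΓ, hρg'⟩⟩
  · rintro ⟨⟨hgΓ, hgσ⟩, ⟨-, hgρ⟩⟩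
    refine ⟨hgΓ, ?_⟩
    rw [hτ]
    show intAct n g '' (σ ∩ ρ) = σ ∩ ρ
    rw [Set.image_inter (S5.intAct_injective g)]
    exact congrArg₂ (· ∩ ·) hgσ hgρ
end
end

section
/- Let n ≥ 1, let Γ be a subgroup of GL_n(ℤ), and let h, h' be neighbouring perfect forms with σ = D(h), ρ = D(h'), and τ = σ ∩ ρ, where σ and ρ are not in the same Γ-orbit. Assume that the setwise stabilizer Γ_σ is finite. Then the set of facets of σ that are Γ-translates of τ equals the Γ_σ-orbit of τ, and its cardinality equals |Γ_σ| / |Γ_τ| (here Γ_τ = Γ_σ ∩ Γ_ρ is a subgroup of Γ_σ). -/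
open Matrix

noncomputable section

/-! ### Auxiliary development -/

section AuxDev

variable {n : ℕ}

/-- Cast an integer vector to a real vector. -/
def castVec {n : ℕ} (x : Fin n → ℤ) : Fin n → ℝ := fun i => (x i : ℝ)

lemma castVec_mulVec (A : Matrix (Fin n) (Fin n) ℤ) (x : Fin n → ℤ) :
    castVec (A.mulVec x) = (realMat A).mulVec (castVec x) := by
  ext i
  simp [castVec, Matrix.mulVec, dotProduct, realMat]

lemma castVec_eq_zero_iff {x : Fin n → ℤ} : castVec x = 0 ↔ x = 0 := by
  constructor
  · intro hx; ext i
    have := congrFun hx i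
    simpa [castVec] using this
  · rintro rfl; ext i; simp [castVec]

lemma realMat_transpose (A : Matrix (Fin n) (Fin n) ℤ) :
    realMat (Aᵀ) = (realMat A)ᵀ := by
  ext i j; simp [realMat]

/-- The real matrix of `γ⁻¹` is a two-sided inverse of the real matrix of `γ`. -/
lemma realMat_inv_mul (γ : GL (Fin n) ℤ) :
    realMat (↑(γ⁻¹) : Matrix (Fin n) (Fin n) ℤ) * realMat (↑γ : Matrix (Fin n) (Fin n) ℤ) = 1 := by
  rw [← realMat_mul]
  rw [Units.inv_mul, realMat_one]

lemma realMat_mul_inv (γ : GL (Fin n) ℤ) :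
    realMat (↑γ : Matrix (Fin n) (Fin n) ℤ) * realMat (↑(γ⁻¹) : Matrix (Fin n) (Fin n) ℤ) = 1 := by
  rw [← realMat_mul]
  rw [Units.mul_inv, realMat_one]

/-- The action of `γ` on integer vectors corresponding to `intAct`. -/
def fvec {n : ℕ} (γ : GL (Fin n) ℤ) (x : Fin n → ℤ) : Fin n → ℤ :=
  ((↑(γ⁻¹) : Matrix (Fin n) (Fin n) ℤ))ᵀ.mulVec x

lemma fvec_fvec_inv (γ : GL (Fin n) ℤ) (x : Fin n → ℤ) : fvec γ (fvec γ⁻¹ x) = x := by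
  unfold fvec
  rw [Matrix.mulVec_mulVec, ← Matrix.transpose_mul, inv_inv, Units.mul_inv,
    Matrix.transpose_one, Matrix.one_mulVec]

lemma fvec_inv_fvec (γ : GL (Fin n) ℤ) (x : Fin n → ℤ) : fvec γ⁻¹ (fvec γ x) = x := by
  have := fvec_fvec_inv γ⁻¹ x
  rwa [inv_inv] at this

lemma fvec_zero (γ : GL (Fin n) ℤ) : fvec γ (0 : Fin n → ℤ) = 0 := by
  unfold fvec; rw [Matrix.mulVec_zero]

lemma fvec_ne_zero {γ : GL (Fin n) ℤ} {x : Fin n → ℤ} (hx : x ≠ 0) : fvec γ x ≠ 0 := by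
  intro hz
  apply hx
  have := congrArg (fvec γ⁻¹) hz
  rwa [fvec_inv_fvec, fvec_zero] at this

lemma fvec_injective (γ : GL (Fin n) ℤ) : Function.Injective (fvec γ) := by
  intro a b hab
  have := congrArg (fvec γ⁻¹) hab
  rwa [fvec_inv_fvec, fvec_inv_fvec] at this

lemma castVec_fvec (γ : GL (Fin n) ℤ) (x : Fin n → ℤ) :
    castVec (fvec γ x) =
      (realMat (↑(γ⁻¹) : Matrix (Fin n) (Fin n) ℤ))ᵀ.mulVec (castVec x) := by
  unfold fvec
  rw [castVec_mulVec, realMat_transpose]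

/-- The action of `γ` on quadratic forms matching `intAct` on Voronoi domains. -/
def formAct {n : ℕ} (γ : GL (Fin n) ℤ) (h : Matrix (Fin n) (Fin n) ℝ) :
    Matrix (Fin n) (Fin n) ℝ :=
  realMat (↑γ : Matrix (Fin n) (Fin n) ℤ) * h * (realMat (↑γ : Matrix (Fin n) (Fin n) ℤ))ᵀ

lemma formAct_inv_formAct (γ : GL (Fin n) ℤ) (h : Matrix (Fin n) (Fin n) ℝ) :
    formAct γ⁻¹ (formAct γ h) = h := by
  unfold formAct
  have h1 := realMat_inv_mul γ
  have h2 : (realMat (↑γ : Matrix (Fin n) (Fin n) ℤ))ᵀ *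
      (realMat (↑(γ⁻¹) : Matrix (Fin n) (Fin n) ℤ))ᵀ = 1 := by
    rw [← Matrix.transpose_mul, realMat_inv_mul, Matrix.transpose_one]
  calc realMat (↑(γ⁻¹) : Matrix (Fin n) (Fin n) ℤ) *
        (realMat (↑γ : Matrix (Fin n) (Fin n) ℤ) * h *
          (realMat (↑γ : Matrix (Fin n) (Fin n) ℤ))ᵀ) *
        (realMat (↑(γ⁻¹) : Matrix (Fin n) (Fin n) ℤ))ᵀ
      = (realMat (↑(γ⁻¹) : Matrix (Fin n) (Fin n) ℤ) *
          realMat (↑γ : Matrix (Fin n) (Fin n) ℤ)) * h *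
          ((realMat (↑γ : Matrix (Fin n) (Fin n) ℤ))ᵀ *
            (realMat (↑(γ⁻¹) : Matrix (Fin n) (Fin n) ℤ))ᵀ) := by
        simp only [Matrix.mul_assoc]
    _ = h := by rw [h1, h2, Matrix.one_mul, Matrix.mul_one]

lemma intQuad_formAct (γ : GL (Fin n) ℤ) (h : Matrix (Fin n) (Fin n) ℝ) (x : Fin n → ℤ) :
    intQuad n (formAct γ h) (fvec γ x) = intQuad n h x := by
  set G := realMat (↑γ : Matrix (Fin n) (Fin n) ℤ) with hG
  set G' := realMat (↑(γ⁻¹) : Matrix (Fin n) (Fin n) ℤ) with hG'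
  have hGG' : G * G' = 1 := realMat_mul_inv γ
  have hG'G : G' * G = 1 := realMat_inv_mul γ
  show castVec (fvec γ x) ⬝ᵥ (G * h * Gᵀ).mulVec (castVec (fvec γ x)) = _
  rw [castVec_fvec]
  rw [Matrix.mulVec_transpose]
  rw [Matrix.dotProduct_mulVec, Matrix.vecMul_vecMul]
  have : castVec x ᵥ* (G' * (G * h * Gᵀ)) = castVec x ᵥ* (h * Gᵀ) := by
    rw [← Matrix.mul_assoc, ← Matrix.mul_assoc, hG'G, Matrix.one_mul]
  rw [this, ← Matrix.dotProduct_mulVec]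
  have h2 : Gᵀ * G'ᵀ = 1 := by rw [← Matrix.transpose_mul, hG'G, Matrix.transpose_one]
  rw [← Matrix.mulVec_transpose G' (castVec x), Matrix.mulVec_mulVec, Matrix.mul_assoc, h2,
    Matrix.mul_one]
  rfl

lemma mem_minVecs_formAct_iff (γ : GL (Fin n) ℤ) (h : Matrix (Fin n) (Fin n) ℝ)
    (x : Fin n → ℤ) : fvec γ x ∈ minVecs n (formAct γ h) ↔ x ∈ minVecs n h := by
  unfold minVecs
  simp only [Set.mem_setOf_eq]
  constructor
  · rintro ⟨hne, hmin⟩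
    refine ⟨fun h0 => hne (by rw [h0, fvec_zero]), fun y hy => ?_⟩
    have := hmin (fvec γ y) (fvec_ne_zero hy)
    rwa [intQuad_formAct, intQuad_formAct] at this
  · rintro ⟨hne, hmin⟩
    refine ⟨fvec_ne_zero hne, fun y hy => ?_⟩
    have hy' : fvec γ (fvec γ⁻¹ y) = y := fvec_fvec_inv γ y
    have hz : fvec γ⁻¹ y ≠ 0 := fvec_ne_zero hy
    calc intQuad n (formAct γ h) (fvec γ x) = intQuad n h x := intQuad_formAct γ h x
      _ ≤ intQuad n h (fvec γ⁻¹ y) := hmin _ hz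
      _ = intQuad n (formAct γ h) (fvec γ (fvec γ⁻¹ y)) := (intQuad_formAct γ h _).symm
      _ = intQuad n (formAct γ h) y := by rw [hy']

lemma minVecs_formAct (γ : GL (Fin n) ℤ) (h : Matrix (Fin n) (Fin n) ℝ) :
    minVecs n (formAct γ h) = fvec γ '' minVecs n h := by
  ext y
  constructor
  · intro hy
    refine ⟨fvec γ⁻¹ y, ?_, fvec_fvec_inv γ y⟩
    rw [← mem_minVecs_formAct_iff γ h, fvec_fvec_inv]
    exact hy
  · rintro ⟨x, hx, rfl⟩
    exact (mem_minVecs_formAct_iff γ h x).2 hx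

lemma conjTranspose_eq_transpose_real (M : Matrix (Fin n) (Fin n) ℝ) : Mᴴ = Mᵀ := by
  ext i j; simp [Matrix.conjTranspose_apply]

lemma posDef_formAct {h : Matrix (Fin n) (Fin n) ℝ} (hh : h.PosDef) (γ : GL (Fin n) ℤ) :
    (formAct γ h).PosDef := by
  set G := realMat (↑γ : Matrix (Fin n) (Fin n) ℤ) with hGdef
  set G' := realMat (↑(γ⁻¹) : Matrix (Fin n) (Fin n) ℤ) with hG'def
  have hGG' : G * G' = 1 := realMat_mul_inv γ
  have hsym : hᵀ = h := by
    have := hh.1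
    rwa [Matrix.IsHermitian, conjTranspose_eq_transpose_real] at this
  refine Matrix.PosDef.of_dotProduct_mulVec_pos ?_ ?_
  · rw [Matrix.IsHermitian, conjTranspose_eq_transpose_real]
    show (G * h * Gᵀ)ᵀ = G * h * Gᵀ
    rw [Matrix.transpose_mul, Matrix.transpose_mul, Matrix.transpose_transpose, hsym,
      Matrix.mul_assoc]
  · intro x hx
    have hinj : Gᵀ.mulVec x ≠ 0 := by
      intro h0
      apply hx
      have : G'ᵀ.mulVec (Gᵀ.mulVec x) = x := by
        rw [Matrix.mulVec_mulVec, ← Matrix.transpose_mul, hGG', Matrix.transpose_one,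
          Matrix.one_mulVec]
      rw [h0, Matrix.mulVec_zero] at this
      exact this.symm
    have := hh.dotProduct_mulVec_pos hinj
    show (0 : ℝ) < star x ⬝ᵥ (G * h * Gᵀ).mulVec x
    have hstar : (star x : Fin n → ℝ) = x := by ext i; simp
    have hstar2 : (star (Gᵀ.mulVec x) : Fin n → ℝ) = Gᵀ.mulVec x := by ext i; simp
    rw [hstar]
    rw [hstar2] at this
    have hcalc : (Gᵀ.mulVec x) ⬝ᵥ h.mulVec (Gᵀ.mulVec x) = x ⬝ᵥ (G * h * Gᵀ).mulVec x := by
      rw [Matrix.mulVec_mulVec, Matrix.dotProduct_mulVec, Matrix.mulVec_transpose,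
        Matrix.vecMul_vecMul, ← Matrix.dotProduct_mulVec, ← Matrix.mul_assoc]
    rw [← hcalc]
    exact this

/-- `intAct` as a linear equivalence. -/
def intActEquiv (n : ℕ) (γ : GL (Fin n) ℤ) : SymMat n ≃ₗ[ℝ] SymMat n :=
  LinearEquiv.ofLinear (intAct n γ) (intAct n γ⁻¹)
    (by rw [← intAct_mul, mul_inv_cancel, intAct_one])
    (by rw [← intAct_mul, inv_mul_cancel, intAct_one])

lemma actSet_eq_image_equiv (γ : GL (Fin n) ℤ) (S : Set (SymMat n)) :
    actSet n γ S = (intActEquiv n γ) '' S := rfl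

lemma actSet_inv_actSet (γ : GL (Fin n) ℤ) (S : Set (SymMat n)) :
    actSet n γ⁻¹ (actSet n γ S) = S := by
  rw [← actSet_mul, inv_mul_cancel, actSet_one]

lemma actSet_actSet_inv (γ : GL (Fin n) ℤ) (S : Set (SymMat n)) :
    actSet n γ (actSet n γ⁻¹ S) = S := by
  rw [← actSet_mul, mul_inv_cancel, actSet_one]

lemma actSet_injective (γ : GL (Fin n) ℤ) {S T : Set (SymMat n)}
    (hST : actSet n γ S = actSet n γ T) : S = T := by
  have := congrArg (actSet n γ⁻¹) hST
  rwa [actSet_inv_actSet, actSet_inv_actSet] at this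

lemma actSet_mono (γ : GL (Fin n) ℤ) {S T : Set (SymMat n)} (hST : S ⊆ T) :
    actSet n γ S ⊆ actSet n γ T :=
  Set.image_mono hST

lemma transpose_mul_vecMulVec_mul (M : Matrix (Fin n) (Fin n) ℝ) (a b : Fin n → ℝ) :
    Mᵀ * Matrix.vecMulVec a b * M =
      Matrix.vecMulVec (Mᵀ.mulVec a) (Mᵀ.mulVec b) := by
  ext i j
  simp only [Matrix.mul_apply, Matrix.vecMulVec_apply, Matrix.mulVec, dotProduct,
    Matrix.transpose_apply]
  rw [Finset.sum_mul_sum]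
  rw [Finset.sum_comm]
  apply Finset.sum_congr rfl
  intro l _
  rw [Finset.sum_mul]
  apply Finset.sum_congr rfl
  intro k _
  ring

lemma intAct_rankOneSym (γ : GL (Fin n) ℤ) (x : Fin n → ℤ) :
    intAct n γ (rankOneSym n x) = rankOneSym n (fvec γ x) := by
  apply Subtype.ext
  show (realMat (↑(γ⁻¹) : Matrix (Fin n) (Fin n) ℤ))ᵀ *
      Matrix.vecMulVec (castVec x) (castVec x) *
      realMat (↑(γ⁻¹) : Matrix (Fin n) (Fin n) ℤ) = _
  rw [transpose_mul_vecMulVec_mul]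
  show _ = Matrix.vecMulVec (castVec (fvec γ x)) (castVec (fvec γ x))
  rw [castVec_fvec]

lemma actSet_vorDom_subset (γ : GL (Fin n) ℤ) (h : Matrix (Fin n) (Fin n) ℝ) :
    actSet n γ (VorDom n h) ⊆ VorDom n (formAct γ h) := by
  rintro _ ⟨M, ⟨s, c, hs, hc, rfl⟩, rfl⟩
  refine ⟨s.image (fvec γ), fun y => c (fvec γ⁻¹ y), ?_, ?_, ?_⟩
  · intro y hy
    obtain ⟨x, hx, rfl⟩ := Finset.mem_image.1 hy
    exact (mem_minVecs_formAct_iff γ h x).2 (hs x hx)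
  · intro y hy
    obtain ⟨x, hx, rfl⟩ := Finset.mem_image.1 hy
    show 0 ≤ c (fvec γ⁻¹ (fvec γ x))
    rw [fvec_inv_fvec]
    exact hc x hx
  · rw [map_sum]
    rw [Finset.sum_image (fun x _ y _ hxy => fvec_injective γ hxy)]
    apply Finset.sum_congr rfl
    intro x _
    show intAct n γ (c x • rankOneSym n x) = c (fvec γ⁻¹ (fvec γ x)) • rankOneSym n (fvec γ x)
    rw [_root_.map_smul, intAct_rankOneSym, fvec_inv_fvec]

lemma actSet_vorDom (γ : GL (Fin n) ℤ) (h : Matrix (Fin n) (Fin n) ℝ) :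
    actSet n γ (VorDom n h) = VorDom n (formAct γ h) := by
  apply subset_antisymm (actSet_vorDom_subset γ h)
  have h1 := actSet_vorDom_subset γ⁻¹ (formAct γ h)
  rw [formAct_inv_formAct] at h1
  have h2 := actSet_mono γ h1
  rwa [actSet_actSet_inv] at h2

lemma isPerfect_formAct {h : Matrix (Fin n) (Fin n) ℝ} (hp : IsPerfect n h)
    (γ : GL (Fin n) ℤ) : IsPerfect n (formAct γ h) := by
  refine ⟨posDef_formAct hp.1 γ, ?_⟩
  rw [minVecs_formAct]
  have himg : rankOneSym n '' (fvec γ '' minVecs n h) =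
      (intAct n γ) '' (rankOneSym n '' minVecs n h) := by
    rw [← Set.image_comp, ← Set.image_comp]
    apply Set.image_congr
    intro x _
    exact (intAct_rankOneSym γ x).symm
  rw [himg, Submodule.span_image, hp.2, Submodule.map_top, LinearMap.range_eq_top]
  intro Y
  refine ⟨intAct n γ⁻¹ Y, ?_⟩
  rw [← LinearMap.comp_apply, ← intAct_mul, mul_inv_cancel, intAct_one, LinearMap.id_apply]

lemma isFacetOf_actSet {C τ : Set (SymMat n)} (γ : GL (Fin n) ℤ)
    (hf : IsFacetOf n C τ) : IsFacetOf n (actSet n γ C) (actSet n γ τ) := by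
  obtain ⟨hext, hrank⟩ := hf
  constructor
  · rw [actSet_eq_image_equiv, actSet_eq_image_equiv]
    constructor
    · exact Set.image_mono hext.1
    · rintro _ ⟨x1, hx1, rfl⟩ _ ⟨x2, hx2, rfl⟩ _ ⟨x, hx, rfl⟩ hseg
      have himg : (intActEquiv n γ) '' openSegment ℝ x1 x2 =
          openSegment ℝ ((intActEquiv n γ) x1) ((intActEquiv n γ) x2) := by
        simpa using
          image_openSegment (f := (intActEquiv n γ).toLinearMap.toAffineMap) (a := x1) (b := x2)
      rw [← himg] at hseg
      obtain ⟨y, hy, hye⟩ := hseg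
      have hyx : y = x := (intActEquiv n γ).injective hye
      subst hyx
      have h1 := hext.2 hx1 hx2 hx hy
      exact Set.mem_image_of_mem _ h1
  · rw [actSet_eq_image_equiv, Submodule.span_image_linearEquiv]
    have hfr : Module.finrank ℝ
        ((Submodule.span ℝ τ).map ((intActEquiv n γ) : SymMat n →ₗ[ℝ] SymMat n)) =
        Module.finrank ℝ (Submodule.span ℝ τ) := by
      have hm : (Submodule.span ℝ τ).map ((intActEquiv n γ) : SymMat n →ₗ[ℝ] SymMat n) =
          (Submodule.span ℝ τ).map ((intActEquiv n γ) : SymMat n →ₗ[ℝ] SymMat n) := rfl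
      rw [hm, LinearEquiv.finrank_map_eq]
    rw [hfr]
    exact hrank

/-- The action of `GL n ℤ` on sets of symmetric matrices as a `MulAction`. -/
instance glSetMulAction (n : ℕ) : MulAction (GL (Fin n) ℤ) (Set (SymMat n)) where
  smul γ S := actSet n γ S
  one_smul := actSet_one n
  mul_smul := actSet_mul n

lemma glsmul_def (γ : GL (Fin n) ℤ) (S : Set (SymMat n)) : γ • S = actSet n γ S := rfl

lemma mem_stab_iff {Γ : Subgroup (GL (Fin n) ℤ)} {S : Set (SymMat n)} {g : GL (Fin n) ℤ} :
    g ∈ stab n Γ S ↔ g ∈ Γ ∧ actSet n g S = S := Iff.rfl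

end AuxDev

/-- Let `Γ ≤ GL_n(ℤ)` and `h, h'` neighbouring perfect forms with `σ = D(h)`,
`ρ = D(h')`, `τ = σ ∩ ρ`, where `σ` and `ρ` are not in the same `Γ`-orbit, and `Γ_σ` finite.
Then the set of facets of `σ` that are `Γ`-translates of `τ` equals the `Γ_σ`-orbit of `τ`,
and its cardinality is `|Γ_σ| / |Γ_τ|`. -/
theorem statement11 (n : ℕ) (hn : 1 ≤ n) (standing : StandingAssumption n)
    (Γ : Subgroup (GL (Fin n) ℤ)) (h h' : Matrix (Fin n) (Fin n) ℝ)
    (hnb : Neighbours n h h')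
    (σ ρ τ : Set (SymMat n)) (hσ : σ = VorDom n h) (hρ : ρ = VorDom n h')
    (hτ : τ = σ ∩ ρ)
    (horb : ¬ ∃ g ∈ Γ, actSet n g σ = ρ)
    (hfin : ((stab n Γ σ : Set (GL (Fin n) ℤ))).Finite) :
    { τ' : Set (SymMat n) | IsFacetOf n σ τ' ∧ ∃ g ∈ Γ, actSet n g τ = τ' } =
      (fun g : GL (Fin n) ℤ => actSet n g τ) '' ↑(stab n Γ σ) ∧
    Nat.card ((fun g : GL (Fin n) ℤ => actSet n g τ) '' ↑(stab n Γ σ) : Set (Set (SymMat n))) =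
      Nat.card (stab n Γ σ) / Nat.card (stab n Γ τ) := by
  have hperf : IsPerfect n h := hnb.1
  have hperf' : IsPerfect n h' := hnb.2.1
  have hne : VorDom n h ≠ VorDom n h' := hnb.2.2.1
  have hfστ : IsFacetOf n σ τ := by
    rw [hτ, hσ, hρ]; exact hnb.2.2.2.1
  have hτσ : τ ⊆ σ := by rw [hτ]; exact Set.inter_subset_left
  have hτρ : τ ⊆ ρ := by rw [hτ]; exact Set.inter_subset_right
  have key : ∀ g ∈ Γ, IsFacetOf n σ (actSet n g τ) → actSet n g σ = σ := by
    intro g hg hfac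
    have hfacV : IsFacetOf n (VorDom n h) (actSet n g τ) := by rw [← hσ]; exact hfac
    obtain ⟨h₂, hperf₂, hne₂, hτeq₂, huniq⟩ := standing h hperf _ hfacV
    have h1 : actSet n g τ ⊆ actSet n g σ := actSet_mono g hτσ
    have h2 : actSet n g τ ⊆ actSet n g ρ := actSet_mono g hτρ
    have hσg : actSet n g σ = VorDom n (formAct g h) := by rw [hσ, actSet_vorDom]
    have hρg : actSet n g ρ = VorDom n (formAct g h') := by rw [hρ, actSet_vorDom]
    have Hσ := huniq (formAct g h) (isPerfect_formAct hperf g) (by rw [← hσg]; exact h1)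
    have Hρ := huniq (formAct g h') (isPerfect_formAct hperf' g) (by rw [← hρg]; exact h2)
    rcases Hρ with Hρ1 | Hρ2
    · exfalso
      apply horb
      refine ⟨g⁻¹, Γ.inv_mem hg, ?_⟩
      have hgρσ : actSet n g ρ = σ := by rw [hρg, Hρ1, ← hσ]
      rw [← hgρσ, actSet_inv_actSet]
    · rcases Hσ with Hσ1 | Hσ2
      · rw [hσg, Hσ1, ← hσ]
      · exfalso
        apply hne
        have hgσρ : actSet n g σ = actSet n g ρ := by rw [hσg, hρg, Hσ2, Hρ2]
        have hσρ := actSet_injective g hgσρ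
        rw [hσ, hρ] at hσρ
        exact hσρ
  have hpart1 : { τ' : Set (SymMat n) | IsFacetOf n σ τ' ∧ ∃ g ∈ Γ, actSet n g τ = τ' } =
      (fun g : GL (Fin n) ℤ => actSet n g τ) '' ↑(stab n Γ σ) := by
    ext τ'
    simp only [Set.mem_setOf_eq, Set.mem_image, SetLike.mem_coe]
    constructor
    · rintro ⟨hfac, g, hg, rfl⟩
      exact ⟨g, mem_stab_iff.2 ⟨hg, key g hg hfac⟩, rfl⟩
    · rintro ⟨g, hgmem, rfl⟩
      obtain ⟨hgΓ, hgσ⟩ := mem_stab_iff.1 hgmem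
      refine ⟨?_, g, hgΓ, rfl⟩
      have hf := isFacetOf_actSet g hfστ
      rwa [hgσ] at hf
  refine ⟨hpart1, ?_⟩
  haveI : Finite ↥(stab n Γ σ) := hfin.to_subtype
  have hstabsub : ∀ g : GL (Fin n) ℤ, g ∈ stab n Γ τ → g ∈ stab n Γ σ := by
    intro g hgτ
    obtain ⟨hgΓ, hgfix⟩ := mem_stab_iff.1 hgτ
    exact mem_stab_iff.2 ⟨hgΓ, key g hgΓ (by rw [hgfix]; exact hfστ)⟩
  have horbeq : (fun g : GL (Fin n) ℤ => actSet n g τ) '' ↑(stab n Γ σ) =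
      MulAction.orbit (stab n Γ σ) τ := by
    ext S
    constructor
    · rintro ⟨g, hg, rfl⟩
      exact ⟨⟨g, hg⟩, rfl⟩
    · rintro ⟨⟨g, hg⟩, rfl⟩
      exact ⟨g, hg, rfl⟩
  have hequiv : ↥(MulAction.stabilizer (stab n Γ σ) τ) ≃ ↥(stab n Γ τ) :=
    { toFun := fun x =>
        ⟨(x.1 : GL (Fin n) ℤ), mem_stab_iff.2 ⟨(mem_stab_iff.1 x.1.2).1,
          MulAction.mem_stabilizer_iff.1 x.2⟩⟩
      invFun := fun y =>
        ⟨⟨y.1, hstabsub y.1 y.2⟩,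
          MulAction.mem_stabilizer_iff.2 ((mem_stab_iff.1 y.2).2)⟩
      left_inv := fun x => Subtype.ext (Subtype.ext rfl)
      right_inv := fun y => Subtype.ext rfl }
  have hcards := Subgroup.card_eq_card_quotient_mul_card_subgroup
    (MulAction.stabilizer (stab n Γ σ) τ)
  have horbcard : Nat.card (MulAction.orbit (stab n Γ σ) τ) =
      Nat.card (↥(stab n Γ σ) ⧸ MulAction.stabilizer (stab n Γ σ) τ) :=
    Nat.card_congr (MulAction.orbitEquivQuotientStabilizer (stab n Γ σ) τ)
  have hstabpos : 0 < Nat.card ↥(MulAction.stabilizer (stab n Γ σ) τ) :=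
    Nat.card_pos
  rw [horbeq, horbcard, ← Nat.card_congr hequiv, hcards,
    Nat.mul_div_cancel _ hstabpos]
end
end

section
/- Let τ ⊆ Sym_2(ℝ) be the set of all nonnegative real linear combinations of the matrices [[1,0],[0,0]] and [[0,0],[0,1]] (a facet of the Voronoi domain of the perfect form A₂). Then the setwise stabilizer of τ in GL_2(ℤ) under the action γ · X = (γ⁻¹)ᵀ X γ⁻¹ equals the integer orthogonal group O_2(ℤ) = { γ ∈ GL_2(ℤ) : γᵀ γ = I }. -/
open Matrix

noncomputable section

lemma unit_sq (x y : ℤ) (h : x*y = 1 ∨ x*y = -1) : x*x = 1 := by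
  have hu : IsUnit x := by
    rcases h with h|h
    · exact IsUnit.of_mul_eq_one _ h
    · exact IsUnit.of_mul_eq_one (a := x) (-y) (by linarith)
  rcases Int.isUnit_iff.mp hu with h|h <;> simp [h]

lemma intlemma (a b c d : ℤ) (h1 : a*b=0) (h2 : c*d=0)
    (h3 : a*d - b*c = 1 ∨ a*d - b*c = -1) :
    a*a + c*c = 1 ∧ b*b + d*d = 1 ∧ a*b + c*d = 0 := by
  rcases mul_eq_zero.mp h1 with ha|hb <;> rcases mul_eq_zero.mp h2 with hc|hd
  · subst ha hc; simp at h3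
  · subst ha hd
    have hb : b*c = 1 ∨ b*c = -1 := by omega
    have hc : c*b = 1 ∨ c*b = -1 := by rw [mul_comm]; exact hb
    refine ⟨by simpa using unit_sq c b hc, by simpa using unit_sq b c hb, by ring⟩
  · subst hb hc
    have hA : a*d = 1 ∨ a*d = -1 := by omega
    have hD : d*a = 1 ∨ d*a = -1 := by rw [mul_comm]; exact hA
    refine ⟨by simpa using unit_sq a d hA, by simpa using unit_sq d a hD, by ring⟩
  · subst hb hd; simp at h3

lemma orthClass (a b c d : ℤ) (h1 : a*a+c*c=1) (h2 : b*b+d*d=1) (h3 : a*b+c*d=0) :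
    (b = 0 ∧ c = 0 ∧ a*a = 1 ∧ d*d = 1) ∨ (a = 0 ∧ d = 0 ∧ b*b = 1 ∧ c*c = 1) := by
  have ha : -1 ≤ a ∧ a ≤ 1 := by constructor <;> nlinarith
  have hb : -1 ≤ b ∧ b ≤ 1 := by constructor <;> nlinarith
  have hc : -1 ≤ c ∧ c ≤ 1 := by constructor <;> nlinarith
  have hd : -1 ≤ d ∧ d ≤ 1 := by constructor <;> nlinarith
  obtain ⟨ha1, ha2⟩ := ha; obtain ⟨hb1, hb2⟩ := hb
  obtain ⟨hc1, hc2⟩ := hc; obtain ⟨hd1, hd2⟩ := hd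
  interval_cases a <;> interval_cases b <;> interval_cases c <;> interval_cases d <;> omega

lemma mem_stab {n : ℕ} {Γ : Subgroup (GL (Fin n) ℤ)} {S : Set (SymMat n)} {g : GL (Fin n) ℤ} :
    g ∈ stab n Γ S ↔ g ∈ Γ ∧ actSet n g S = S := Iff.rfl

lemma transp2 (a b c d : ℝ) : !![a, b; c, d]ᵀ = !![a, c; b, d] := by
  ext i j; fin_cases i <;> fin_cases j <;> rfl

lemma smul_comb (p q : ℝ) :
    p • !![(1 : ℝ), 0; 0, 0] + q • !![(0 : ℝ), 0; 0, 1] = !![p, 0; 0, q] := by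
  ext i j; fin_cases i <;> fin_cases j <;> simp

lemma act_subset (τ : Set (SymMat 2))
    (hτ : τ = { M : SymMat 2 | ∃ a b : ℝ, 0 ≤ a ∧ 0 ≤ b ∧
      (M : Matrix (Fin 2) (Fin 2) ℝ) = a • !![(1 : ℝ), 0; 0, 0] + b • !![(0 : ℝ), 0; 0, 1] })
    (γ : GL (Fin 2) ℤ)
    (hN : ((γ⁻¹ : GL (Fin 2) ℤ) : Matrix (Fin 2) (Fin 2) ℤ)ᵀ *
      ((γ⁻¹ : GL (Fin 2) ℤ) : Matrix (Fin 2) (Fin 2) ℤ) = 1) :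
    actSet 2 γ τ ⊆ τ := by
  set N : Matrix (Fin 2) (Fin 2) ℤ := ((γ⁻¹ : GL (Fin 2) ℤ) : Matrix (Fin 2) (Fin 2) ℤ) with hNdef
  have h00 := congrFun (congrFun hN 0) 0
  have h01 := congrFun (congrFun hN 0) 1
  have h11 := congrFun (congrFun hN 1) 1
  simp [Matrix.mul_apply, Fin.sum_univ_two, Matrix.one_apply] at h00 h01 h11
  rintro _ ⟨X, hX, rfl⟩
  rw [hτ] at hX ⊢
  obtain ⟨p, q, hp, hq, hXv⟩ := hX
  have hval : ((intAct 2 γ X : SymMat 2) : Matrix (Fin 2) (Fin 2) ℝ)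
      = (realMat N)ᵀ * (X : Matrix (Fin 2) (Fin 2) ℝ) * realMat N := rfl
  rcases orthClass (N 0 0) (N 0 1) (N 1 0) (N 1 1) h00 h11 h01 with
    ⟨hb, hc, haa, hdd⟩ | ⟨ha, hd, hbb, hcc⟩
  · refine ⟨p, q, hp, hq, ?_⟩
    have hg : realMat N = !![((N 0 0 : ℤ) : ℝ), 0; 0, ((N 1 1 : ℤ) : ℝ)] := by
      ext i j; fin_cases i <;> fin_cases j <;> simp [realMat, hb, hc]
    have hx : ((N 0 0 : ℤ) : ℝ) * ((N 0 0 : ℤ) : ℝ) = 1 := by exact_mod_cast haa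
    have hw : ((N 1 1 : ℤ) : ℝ) * ((N 1 1 : ℤ) : ℝ) = 1 := by exact_mod_cast hdd
    rw [hval, hXv, hg, smul_comb]
    have key : ∀ x w : ℝ, !![x, 0; 0, w]ᵀ * !![p, 0; 0, q] * !![x, 0; 0, w]
        = !![p*(x*x), 0; 0, q*(w*w)] := by
      intro x w
      rw [transp2, Matrix.mul_fin_two, Matrix.mul_fin_two]
      ext i j; fin_cases i <;> fin_cases j <;> simp <;> ring
    rw [key, hx, hw, mul_one, mul_one]
  · refine ⟨q, p, hq, hp, ?_⟩
    have hg : realMat N = !![0, ((N 0 1 : ℤ) : ℝ); ((N 1 0 : ℤ) : ℝ), 0] := by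
      ext i j; fin_cases i <;> fin_cases j <;> simp [realMat, ha, hd]
    have hy : ((N 0 1 : ℤ) : ℝ) * ((N 0 1 : ℤ) : ℝ) = 1 := by exact_mod_cast hbb
    have hz : ((N 1 0 : ℤ) : ℝ) * ((N 1 0 : ℤ) : ℝ) = 1 := by exact_mod_cast hcc
    rw [hval, hXv, hg, smul_comb]
    have key : ∀ y z : ℝ, !![0, y; z, 0]ᵀ * !![p, 0; 0, q] * !![0, y; z, 0]
        = !![q*(z*z), 0; 0, p*(y*y)] := by
      intro y z
      rw [transp2, Matrix.mul_fin_two, Matrix.mul_fin_two]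
      ext i j; fin_cases i <;> fin_cases j <;> simp <;> ring
    rw [key, hy, hz, mul_one, mul_one, smul_comb]

/-- Let `τ ⊆ Sym_2(ℝ)` be the cone of nonnegative combinations of
`[[1,0],[0,0]]` and `[[0,0],[0,1]]`. Its setwise stabilizer in `GL_2(ℤ)` (acting by
`γ · X = (γ⁻¹)ᵀ X γ⁻¹`) is the integer orthogonal group `O_2(ℤ) = {γ : γᵀγ = 1}`. -/
theorem statement15 (τ : Set (SymMat 2))
    (hτ : τ = { M : SymMat 2 | ∃ a b : ℝ, 0 ≤ a ∧ 0 ≤ b ∧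
      (M : Matrix (Fin 2) (Fin 2) ℝ) = a • !![(1 : ℝ), 0; 0, 0] + b • !![(0 : ℝ), 0; 0, 1] }) :
    (stab 2 ⊤ τ : Set (GL (Fin 2) ℤ)) =
      { γ : GL (Fin 2) ℤ | (γ : Matrix (Fin 2) (Fin 2) ℤ)ᵀ * (γ : Matrix (Fin 2) (Fin 2) ℤ) = 1 } := by
  ext γ
  simp only [SetLike.mem_coe, Set.mem_setOf_eq, mem_stab]
  set M : Matrix (Fin 2) (Fin 2) ℤ := ((γ : GL (Fin 2) ℤ) : Matrix (Fin 2) (Fin 2) ℤ) with hMdef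
  set N : Matrix (Fin 2) (Fin 2) ℤ := ((γ⁻¹ : GL (Fin 2) ℤ) : Matrix (Fin 2) (Fin 2) ℤ) with hNdef
  have hNM : N * M = 1 := by
    rw [hMdef, hNdef, ← Units.val_mul, inv_mul_cancel γ, Units.val_one]
  have hMN : M * N = 1 := by
    rw [hMdef, hNdef, ← Units.val_mul, mul_inv_cancel γ, Units.val_one]
  constructor
  · rintro ⟨-, hact⟩
    -- image of the two extreme rays lies in τ
    have hsym1 : (!![(1:ℝ),0;0,0])ᵀ = !![(1:ℝ),0;0,0] := by
      ext i j; fin_cases i <;> fin_cases j <;> rfl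
    have hsym2 : (!![(0:ℝ),0;0,1])ᵀ = !![(0:ℝ),0;0,1] := by
      ext i j; fin_cases i <;> fin_cases j <;> rfl
    set E1 : SymMat 2 := ⟨!![(1:ℝ),0;0,0], hsym1⟩ with hE1def
    set E2 : SymMat 2 := ⟨!![(0:ℝ),0;0,1], hsym2⟩ with hE2def
    have hE1 : E1 ∈ τ := by
      rw [hτ]; exact ⟨1, 0, zero_le_one, le_refl 0, by simp [hE1def]⟩
    have hE2 : E2 ∈ τ := by
      rw [hτ]; exact ⟨0, 1, le_refl 0, zero_le_one, by simp [hE2def]⟩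
    have hm1 : intAct 2 γ E1 ∈ τ := by
      rw [← hact]; exact Set.mem_image_of_mem _ hE1
    have hm2 : intAct 2 γ E2 ∈ τ := by
      rw [← hact]; exact Set.mem_image_of_mem _ hE2
    rw [hτ] at hm1 hm2
    obtain ⟨a1, b1, -, -, heq1⟩ := hm1
    obtain ⟨a2, b2, -, -, heq2⟩ := hm2
    rw [smul_comb] at heq1 heq2
    have hv1 : (realMat N)ᵀ * !![(1:ℝ),0;0,0] * realMat N = !![a1, 0; 0, b1] := heq1
    have hv2 : (realMat N)ᵀ * !![(0:ℝ),0;0,1] * realMat N = !![a2, 0; 0, b2] := heq2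
    have e1 := congrFun (congrFun hv1 0) 1
    have e2 := congrFun (congrFun hv2 0) 1
    simp [Matrix.mul_apply, Fin.sum_univ_two, realMat] at e1 e2
    have p1 : N 0 0 * N 0 1 = 0 := by rcases e1 with h|h <;> simp [h]
    have p2 : N 1 0 * N 1 1 = 0 := by rcases e2 with h|h <;> simp [h]
    have hdetu : N.det * M.det = 1 := by rw [← Matrix.det_mul, hNM, Matrix.det_one]
    have hdet : N 0 0 * N 1 1 - N 0 1 * N 1 0 = 1 ∨
        N 0 0 * N 1 1 - N 0 1 * N 1 0 = -1 := by
      have := Int.isUnit_iff.mp (IsUnit.of_mul_eq_one _ hdetu)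
      rwa [Matrix.det_fin_two] at this
    obtain ⟨q1, q2, q3⟩ := intlemma (N 0 0) (N 0 1) (N 1 0) (N 1 1) p1 p2 hdet
    have hN : Nᵀ * N = 1 := by
      ext i j
      fin_cases i <;> fin_cases j <;>
        simp [Matrix.mul_apply, Fin.sum_univ_two, Matrix.one_apply] <;> linarith
    calc Mᵀ * M = Mᵀ * (Nᵀ * N) * M := by rw [hN, Matrix.mul_one]
      _ = (N * M)ᵀ * (N * M) := by
          rw [Matrix.transpose_mul]; simp [Matrix.mul_assoc]
      _ = 1 := by rw [hNM, Matrix.transpose_one, Matrix.mul_one]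
  · intro hM
    have hN : Nᵀ * N = 1 := by
      calc Nᵀ * N = Nᵀ * (Mᵀ * M) * N := by rw [hM, Matrix.mul_one]
        _ = (M * N)ᵀ * (M * N) := by
            rw [Matrix.transpose_mul]; simp [Matrix.mul_assoc]
        _ = 1 := by rw [hMN, Matrix.transpose_one, Matrix.mul_one]
    have incl1 : actSet 2 γ τ ⊆ τ := act_subset τ hτ γ hN
    have incl2 : actSet 2 γ⁻¹ τ ⊆ τ := by
      refine act_subset τ hτ γ⁻¹ ?_
      rw [inv_inv]; exact hM
    refine ⟨Subgroup.mem_top γ, Set.Subset.antisymm incl1 ?_⟩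
    have h3 : actSet 2 γ (actSet 2 γ⁻¹ τ) ⊆ actSet 2 γ τ := Set.image_mono incl2
    rwa [← actSet_mul, mul_inv_cancel γ, actSet_one] at h3
end
end
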